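/- Main theorem for ℜ: for every formula φ of 𝓛, the following three statements are equivalent: (1) φ is a tautology of the standard enumeration ζ of nondeterministic partial recursive functions; (2) w ⊩ φ for every world w of every Kripke model; (3) ⊢_ℜ φ. -/

import Mathlib

/-- Formulas of the modal language 𝓛: propositional variables, ⊥, →, and ▷. -/
inductive Formula : Type
  | var : ℕ → Formula
  | bot : Formula
  | imp : Formula → Formula → Formula
  | tri : Formula → Formula → Formula
deriving DecidableEq

namespace Formula

/-- ¬φ := φ → ⊥ -/
def neg (φ : Formula) : Formula := imp φ bot
/-- ⊤ := ¬⊥ -/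
def top : Formula := neg bot
/-- φ ∨ ψ := ¬φ → ψ -/
def disj (φ ψ : Formula) : Formula := imp (neg φ) ψ
/-- φ ∧ ψ := ¬(φ → ¬ψ) -/
def conj (φ ψ : Formula) : Formula := neg (imp φ (neg ψ))

/-- `φ` is a substitution instance of a classical propositional tautology:
it evaluates to `true` under every boolean valuation of formulas that
respects `⊥` and `→` (variables and `▷`-formulas are treated as atoms). -/
def IsPropTaut (φ : Formula) : Prop :=
  ∀ v : Formula → Bool, v bot = false →
    (∀ a b, v (imp a b) = (!(v a) || v b)) → v φ = true

/-- Hilbert-style provability.  `Prv false` is the logic ℜ (axioms: classical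
tautologies, A1, A2, A3; rules: Modus Ponens and monotonicity M);
`Prv true` is the logic ℜ_d, which additionally has axiom A4. -/
inductive Prv : Bool → Formula → Prop
  | taut {d : Bool} {φ} : IsPropTaut φ → Prv d φ
  | a1 {d : Bool} (φ ψ χ) : Prv d (imp (tri φ ψ) (imp (tri χ ψ) (tri (disj φ χ) ψ)))
  | a2 {d : Bool} (φ) : Prv d (tri bot φ)
  | a3 {d : Bool} (φ) : Prv d (tri φ top)
  | a4 (φ ψ χ) : Prv true (imp (tri φ ψ) (imp (tri φ χ) (tri φ (conj ψ χ))))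
  | mp {d : Bool} {φ ψ} : Prv d (imp φ ψ) → Prv d φ → Prv d ψ
  | mono {d : Bool} {φ₁ φ₂ ψ₁ ψ₂} : Prv d (imp φ₁ φ₂) → Prv d (imp ψ₁ ψ₂) →
      Prv d (imp (tri φ₂ ψ₁) (tri φ₁ ψ₂))

/-- `Deriv d Δ φ`: φ is derivable from the hypotheses Δ together with all
theorems of the logic (`Prv d`) using only Modus Ponens. -/
inductive Deriv (d : Bool) (Δ : Set Formula) : Formula → Prop
  | hyp {φ} : φ ∈ Δ → Deriv d Δ φ
  | thm {φ} : Prv d φ → Deriv d Δ φ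
  | mp {φ ψ} : Deriv d Δ (imp φ ψ) → Deriv d Δ φ → Deriv d Δ ψ

/-- Conjunction of a list of formulas (empty conjunction is ⊤). -/
def conjList : List Formula → Formula
  | [] => top
  | φ :: l => conj φ (conjList l)

/-- ⋀Γ : conjunction of all formulas of a finite set Γ (⋀∅ = ⊤). -/
noncomputable def bigConj (Γ : Finset Formula) : Formula := conjList Γ.toList

/-- A set of formulas is consistent if ⊥ is not derivable from it. -/
def Consistent (d : Bool) (Δ : Set Formula) : Prop := ¬ Deriv d Δ bot

/-- The pair (u,v) is w-consistent: w ⊬ ⋀u ▷ ¬⋀v. -/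
def WCons (d : Bool) (w : Set Formula) (u v : Finset Formula) : Prop :=
  ¬ Deriv d w (tri (bigConj u) (neg (bigConj v)))

/-- The operation ∼: ∼(¬φ) = φ, and ∼φ = ¬φ if φ is not a negation. -/
def simNeg : Formula → Formula
  | imp φ bot => φ
  | φ => neg φ

/-- Φ is closed under subformulas. -/
def SubClosed (Φ : Finset Formula) : Prop :=
  (∀ a b, imp a b ∈ Φ → a ∈ Φ ∧ b ∈ Φ) ∧ (∀ a b, tri a b ∈ Φ → a ∈ Φ ∧ b ∈ Φ)

/-- Φ is closed under the operation ∼. -/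
def SimClosed (Φ : Finset Formula) : Prop := ∀ φ ∈ Φ, simNeg φ ∈ Φ

/-- w is a maximal consistent subset of Φ: w ⊆ Φ, w is consistent, and for
every φ ∈ Φ either φ ∈ w or ∼φ ∈ w. -/
def MaxCons (d : Bool) (Φ : Finset Formula) (w : Finset Formula) : Prop :=
  w ⊆ Φ ∧ Consistent d ↑w ∧ ∀ φ ∈ Φ, φ ∈ w ∨ simNeg φ ∈ w

/-- Kripke forcing: `rel w u v` means u →_w v, `val w p` means w ⊩ p. -/
def Forces {W : Type*} (rel : W → W → W → Prop) (val : W → ℕ → Prop) :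
    W → Formula → Prop
  | w, var p => val w p
  | _, bot => False
  | w, imp a b => Forces rel val w a → Forces rel val w b
  | w, tri a b => ∀ u v, rel w u v → Forces rel val u a →
      ∃ v', rel w u v' ∧ Forces rel val v' b

end Formula

/-- A Kripke model: a finite set of worlds, a ternary computability relation,
and a forcing relation between worlds and propositional variables. -/
structure KripkeModel where
  W : Type
  fin : Finite W
  rel : W → W → W → Prop
  val : W → ℕ → Prop

/-- A Kripke model is deterministic if for all worlds w, u there is at most
one v with u →_w v. -/
def KripkeModel.Deterministic (M : KripkeModel) : Prop :=
  ∀ w u v v', M.rel w u v → M.rel w u v' → v = v'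

/-- Forcing in a Kripke model. -/
def KripkeModel.Forces (M : KripkeModel) : M.W → Formula → Prop :=
  Formula.Forces M.rel M.val

/-- The standard enumeration of nondeterministic partial recursive functions:
ζ_w(u) = the set of possible outputs of machine (code) w on input u. -/
def zeta (w u : ℕ) : Set ℕ :=
  {v | ((Denumerable.ofNat Nat.Partrec.Code w).eval (Nat.pair u v)).Dom}

/-- The standard enumeration of deterministic partial recursive functions:
ξ_w(u) = the value of the partial recursive function with code w on input u. -/
def xi (w u : ℕ) : Part ℕ :=
  (Denumerable.ofNat Nat.Partrec.Code w).eval u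

namespace Formula

/-- Set semantics for nondeterministic partial recursive functions
(existential reading of ▷). -/
def semN (val : ℕ → Set ℕ) : Formula → Set ℕ
  | var p => val p
  | bot => ∅
  | imp a b => (Set.univ \ semN val a) ∪ semN val b
  | tri a b => {w | ∀ u ∈ semN val a, zeta w u ≠ ∅ → zeta w u ∩ semN val b ≠ ∅}

/-- Set semantics for deterministic partial recursive functions. -/
def semD (val : ℕ → Set ℕ) : Formula → Set ℕ
  | var p => val p
  | bot => ∅
  | imp a b => (Set.univ \ semD val a) ∪ semD val b
  | tri a b => {w | ∀ u ∈ semD val a, ∀ h : (xi w u).Dom, (xi w u).get h ∈ semD val b}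

/-- Universal set semantics for nondeterministic partial recursive functions:
every terminating computation path from φ* ends in ψ*. -/
def semU (val : ℕ → Set ℕ) : Formula → Set ℕ
  | var p => val p
  | bot => ∅
  | imp a b => (Set.univ \ semU val a) ∪ semU val b
  | tri a b => {w | ∀ u ∈ semU val a, zeta w u ⊆ semU val b}

/-- A canonical injective encoding of formulas as natural numbers. -/
def enc : Formula → ℕ
  | var n => 4 * n
  | bot => 1
  | imp a b => 4 * Nat.pair (enc a) (enc b) + 2
  | tri a b => 4 * Nat.pair (enc a) (enc b) + 3

end Formula

namespace Formula

/-! ### Propositional toolkit -/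

lemma v_neg {v : Formula → Bool} (h1 : ∀ a b, v (imp a b) = (!(v a) || v b))
    (h0 : v bot = false) (a : Formula) : v (neg a) = !(v a) := by
  simp [neg, h1, h0]

lemma v_top {v : Formula → Bool} (h1 : ∀ a b, v (imp a b) = (!(v a) || v b))
    (h0 : v bot = false) : v top = true := by simp [top, v_neg h1 h0, h0]

lemma v_disj {v : Formula → Bool} (h1 : ∀ a b, v (imp a b) = (!(v a) || v b))
    (h0 : v bot = false) (a b : Formula) : v (disj a b) = (v a || v b) := by
  simp [disj, h1, v_neg h1 h0]

lemma v_conj {v : Formula → Bool} (h1 : ∀ a b, v (imp a b) = (!(v a) || v b))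
    (h0 : v bot = false) (a b : Formula) : v (conj a b) = (v a && v b) := by
  simp [conj, h1, v_neg h1 h0]

lemma simNeg_eq (ψ : Formula) : (∃ a, ψ = imp a bot ∧ simNeg ψ = a) ∨ simNeg ψ = neg ψ := by
  cases ψ with
  | var n => right; rfl
  | bot => right; rfl
  | tri a b => right; rfl
  | imp a b =>
    cases b with
    | var n => right; rfl
    | bot => left; exact ⟨a, rfl, rfl⟩
    | imp c d => right; rfl
    | tri c d => right; rfl

lemma v_simNeg {v : Formula → Bool} (h1 : ∀ a b, v (imp a b) = (!(v a) || v b))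
    (h0 : v bot = false) (ψ : Formula) : v (simNeg ψ) = !(v ψ) := by
  rcases simNeg_eq ψ with ⟨a, rfl, hs⟩ | hs
  · rw [hs, h1, h0]; cases v a <;> rfl
  · rw [hs, v_neg h1 h0]

lemma v_conjList {v : Formula → Bool} (h1 : ∀ a b, v (imp a b) = (!(v a) || v b))
    (h0 : v bot = false) (L : List Formula) : v (conjList L) = L.all v := by
  induction L with
  | nil => simp [conjList, v_top h1 h0]
  | cons a t ih => simp [conjList, v_conj h1 h0, ih]

/-- disjunction of a list of formulas (empty disjunction is ⊥). -/
def disjList : List Formula → Formula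
  | [] => bot
  | a :: t => disj a (disjList t)

lemma v_disjList {v : Formula → Bool} (h1 : ∀ a b, v (imp a b) = (!(v a) || v b))
    (h0 : v bot = false) (L : List Formula) : v (disjList L) = L.any v := by
  induction L with
  | nil => simp [disjList, h0]
  | cons a t ih => simp [disjList, v_disj h1 h0, ih]

/-! ### Deriv toolkit -/

lemma Deriv.monoSet {d Δ Δ' φ} (h : Δ ⊆ Δ') (hd : Deriv d Δ φ) : Deriv d Δ' φ := by
  induction hd with
  | hyp hφ => exact Deriv.hyp (h hφ)
  | thm hφ => exact Deriv.thm hφ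
  | mp _ _ ih1 ih2 => exact Deriv.mp ih1 ih2

lemma Deriv.tautMP {d Δ a b} (h : IsPropTaut (imp a b)) (ha : Deriv d Δ a) : Deriv d Δ b :=
  Deriv.mp (Deriv.thm (Prv.taut h)) ha

lemma Deriv.tautMP₂ {d Δ a b c} (h : IsPropTaut (imp a (imp b c)))
    (ha : Deriv d Δ a) (hb : Deriv d Δ b) : Deriv d Δ c :=
  Deriv.mp (Deriv.mp (Deriv.thm (Prv.taut h)) ha) hb

lemma Prv.tautMP {d a b} (h : IsPropTaut (imp a b)) (ha : Prv d a) : Prv d b :=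
  Prv.mp (Prv.taut h) ha

/-- The deduction theorem. -/
lemma deduction {d : Bool} {Δ : Set Formula} {ψ φ : Formula}
    (h : Deriv d (insert ψ Δ) φ) : Deriv d Δ (imp ψ φ) := by
  induction h with
  | @hyp φ hφ =>
    rcases hφ with rfl | hφ
    · exact Deriv.thm (Prv.taut (by intro v h0 h1; simp [h1]))
    · refine Deriv.tautMP ?_ (Deriv.hyp hφ)
      intro v h0 h1; simp [h1]; cases v φ <;> cases v ψ <;> simp
  | @thm φ hφ =>
    refine Deriv.tautMP ?_ (Deriv.thm hφ)
    intro v h0 h1; simp [h1]; cases v φ <;> cases v ψ <;> simp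
  | @mp a b _ _ ih1 ih2 =>
    refine Deriv.tautMP₂ ?_ ih1 ih2
    intro v h0 h1; simp [h1]; cases v a <;> cases v b <;> cases v ψ <;> simp

lemma prv_of_deriv_empty {d φ} (h : Deriv d (∅ : Set Formula) φ) : Prv d φ := by
  induction h with
  | hyp hφ => exact absurd hφ (Set.notMem_empty _)
  | thm hφ => exact hφ
  | mp _ _ ih1 ih2 => exact Prv.mp ih1 ih2

/-- Iterated deduction over a list of hypotheses. -/
lemma prv_imp_conjList {d : Bool} {χ : Formula} :
    ∀ {L : List Formula}, Deriv d (↑L.toFinset) χ → Prv d (imp (conjList L) χ) := by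
  intro L
  induction L generalizing χ with
  | nil =>
    intro h
    simp only [List.toFinset_nil, Finset.coe_empty] at h
    have := prv_of_deriv_empty h
    refine Prv.tautMP ?_ this
    intro v h0 h1; simp [h1, conjList]; cases v χ <;> simp [v_top h1 h0]
  | cons a t ih =>
    intro h
    simp only [List.toFinset_cons, Finset.coe_insert] at h
    have h2 := deduction h
    have h3 := ih h2
    refine Prv.tautMP ?_ h3
    intro v h0 h1
    simp [h1, conjList, v_conj h1 h0]
    cases v a <;> cases v (conjList t) <;> cases v χ <;> simp

lemma taut_conjList_mem {a : Formula} {L : List Formula} (ha : a ∈ L) :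
    IsPropTaut (imp (conjList L) a) := by
  intro v h0 h1
  rw [h1, v_conjList h1 h0]
  by_cases h : L.all v = true
  · rw [List.all_eq_true] at h
    simp [h a ha]
  · simp [Bool.not_eq_true] at h ⊢
    simp [h]

lemma taut_conjList_mono {L L' : List Formula} (h : ∀ x ∈ L', x ∈ L) :
    IsPropTaut (imp (conjList L) (conjList L')) := by
  intro v h0 h1
  rw [h1, v_conjList h1 h0, v_conjList h1 h0]
  by_cases hh : L.all v = true
  · rw [List.all_eq_true] at hh
    have : L'.all v = true := List.all_eq_true.2 fun x hx => hh x (h x hx)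
    simp [this]
  · simp [Bool.not_eq_true] at hh ⊢
    simp [hh]

end Formula
namespace Formula

/-! ### Contradiction lemmas for `simNeg` -/

lemma taut_contra (ψ : Formula) : IsPropTaut (imp ψ (imp (simNeg ψ) bot)) := by
  intro v h0 h1
  simp [h1, v_simNeg h1 h0, h0]

lemma deriv_bot_of_mem_simNeg {d : Bool} {Δ : Set Formula} {ψ : Formula}
    (h1 : Deriv d Δ ψ) (h2 : Deriv d Δ (simNeg ψ)) : Deriv d Δ bot :=
  Deriv.tautMP₂ (taut_contra ψ) h1 h2

lemma cons_insert_or {d : Bool} {w : Finset Formula} {ψ : Formula}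
    (hw : ¬ Deriv d ↑w bot) :
    ¬ Deriv d ↑(insert ψ w) bot ∨ ¬ Deriv d ↑(insert (simNeg ψ) w) bot := by
  by_contra h
  push_neg at h
  obtain ⟨h1, h2⟩ := h
  rw [Finset.coe_insert] at h1 h2
  have d1 := deduction h1
  have d2 := deduction h2
  refine hw (Deriv.tautMP₂ ?_ d1 d2)
  intro v h0 h1
  simp [h1, v_simNeg h1 h0, h0]

/-! ### Lindenbaum for finite closed sets -/

lemma lindenbaum {Φ : Finset Formula} (hsim : SimClosed Φ) {Δ : Finset Formula}
    (hsub : Δ ⊆ Φ) (hcons : ¬ Deriv false ↑Δ bot) :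
    ∃ w : Finset Formula, MaxCons false Φ w ∧ Δ ⊆ w := by
  classical
  set S : Finset (Finset Formula) :=
    Φ.powerset.filter (fun w => Δ ⊆ w ∧ ¬ Deriv false ↑w bot) with hS
  have hΔS : Δ ∈ S := by
    simp only [hS, Finset.mem_filter, Finset.mem_powerset]
    exact ⟨hsub, subset_rfl, hcons⟩
  obtain ⟨w, hwS, hmax⟩ := S.exists_max_image Finset.card ⟨Δ, hΔS⟩
  simp only [hS, Finset.mem_filter, Finset.mem_powerset] at hwS
  obtain ⟨hwΦ, hΔw, hwcons⟩ := hwS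
  refine ⟨w, ⟨hwΦ, hwcons, ?_⟩, hΔw⟩
  intro ψ hψ
  by_contra hc
  push_neg at hc
  obtain ⟨h1, h2⟩ := hc
  rcases cons_insert_or (ψ := ψ) hwcons with hcons' | hcons'
  · have hmem : insert ψ w ∈ S := by
      simp only [hS, Finset.mem_filter, Finset.mem_powerset]
      exact ⟨Finset.insert_subset hψ hwΦ, hΔw.trans (Finset.subset_insert _ _), hcons'⟩
    have := hmax _ hmem
    rw [Finset.card_insert_of_notMem h1] at this
    omega
  · have hmem : insert (simNeg ψ) w ∈ S := by
      simp only [hS, Finset.mem_filter, Finset.mem_powerset]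
      exact ⟨Finset.insert_subset (hsim ψ hψ) hwΦ, hΔw.trans (Finset.subset_insert _ _), hcons'⟩
    have := hmax _ hmem
    rw [Finset.card_insert_of_notMem h2] at this
    omega

/-! ### Maximal consistent sets -/

lemma MaxCons.not_both {Φ w : Finset Formula} (h : MaxCons false Φ w)
    {ψ : Formula} (h1 : ψ ∈ w) (h2 : simNeg ψ ∈ w) : False :=
  h.2.1 (deriv_bot_of_mem_simNeg (Deriv.hyp h1) (Deriv.hyp h2))

lemma MaxCons.mem_iff_deriv {Φ w : Finset Formula} (h : MaxCons false Φ w)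
    {ψ : Formula} (hψ : ψ ∈ Φ) : ψ ∈ w ↔ Deriv false ↑w ψ := by
  constructor
  · exact fun hm => Deriv.hyp hm
  · intro hd
    rcases h.2.2 ψ hψ with hm | hm
    · exact hm
    · exact absurd (deriv_bot_of_mem_simNeg hd (Deriv.hyp hm)) h.2.1

/-! ### The closure Φ of a formula -/

/-- The set of subformulas of a formula. -/
def sub : Formula → Finset Formula
  | var n => {var n}
  | bot => {bot}
  | imp a b => insert (imp a b) (sub a ∪ sub b)
  | tri a b => insert (tri a b) (sub a ∪ sub b)

lemma mem_sub_self (φ : Formula) : φ ∈ sub φ := by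
  cases φ <;> simp [sub]

lemma sub_trans : ∀ {φ ψ : Formula}, ψ ∈ sub φ → sub ψ ⊆ sub φ := by
  intro φ
  induction φ with
  | var n => intro ψ h; simp [sub] at h; subst h; exact subset_rfl
  | bot => intro ψ h; simp [sub] at h; subst h; exact subset_rfl
  | imp a b iha ihb =>
    intro ψ h
    simp [sub] at h
    rcases h with rfl | h | h
    · exact subset_rfl
    · exact (iha h).trans (by simp [sub, Finset.subset_insert_iff_of_notMem,
        Finset.subset_union_left]; intro x hx; simp [Finset.mem_insert]; right; left; exact hx)
    · exact (ihb h).trans (by intro x hx; simp [sub, Finset.mem_insert]; right; right; exact hx)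
  | tri a b iha ihb =>
    intro ψ h
    simp [sub] at h
    rcases h with rfl | h | h
    · exact subset_rfl
    · exact (iha h).trans (by intro x hx; simp [sub, Finset.mem_insert]; right; left; exact hx)
    · exact (ihb h).trans (by intro x hx; simp [sub, Finset.mem_insert]; right; right; exact hx)

lemma sub_imp_mem {a b φ : Formula} (h : imp a b ∈ sub φ) : a ∈ sub φ ∧ b ∈ sub φ := by
  have := sub_trans h
  constructor
  · exact this (by simp [sub, mem_sub_self])
  · exact this (by simp [sub, mem_sub_self])

lemma sub_tri_mem {a b φ : Formula} (h : tri a b ∈ sub φ) : a ∈ sub φ ∧ b ∈ sub φ := by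
  have := sub_trans h
  constructor
  · exact this (by simp [sub, mem_sub_self])
  · exact this (by simp [sub, mem_sub_self])

/-- The closure of φ: subformulas, their `simNeg`s, plus ⊥ and ⊤. -/
def cl (φ : Formula) : Finset Formula :=
  insert bot (insert top ((sub φ) ∪ (sub φ).image simNeg))

lemma mem_cl_self (φ : Formula) : φ ∈ cl φ := by
  simp [cl, mem_sub_self]

lemma bot_mem_cl (φ : Formula) : bot ∈ cl φ := by simp [cl]

lemma top_mem_cl (φ : Formula) : top ∈ cl φ := by simp [cl]

lemma simNeg_mem_cl (φ : Formula) : simNeg φ ∈ cl φ := by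
  simp only [cl, Finset.mem_insert, Finset.mem_union, Finset.mem_image]
  right; right; right
  exact ⟨φ, mem_sub_self φ, rfl⟩

lemma cl_subClosed (φ : Formula) : SubClosed (cl φ) := by
  constructor
  · intro a b hab
    simp only [cl, Finset.mem_insert, Finset.mem_union, Finset.mem_image] at hab
    rcases hab with h | h | h | ⟨ψ, hψ, hs⟩
    · exact absurd h (by simp)
    · -- imp a b = top = imp bot bot
      have : bot = a ∧ bot = b := by
        simpa [top, neg, Formula.imp.injEq] using h.symm
      obtain ⟨rfl, rfl⟩ := this
      exact ⟨bot_mem_cl φ, bot_mem_cl φ⟩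
    · obtain ⟨h1, h2⟩ := sub_imp_mem h
      constructor <;> simp [cl, h1, h2]
    · rcases simNeg_eq ψ with ⟨c, rfl, hs'⟩ | hs'
      · -- simNeg (imp c bot) = c, and c = imp a b ∈ sub φ
        rw [hs'] at hs
        subst hs
        obtain ⟨hc, _⟩ := sub_imp_mem hψ
        obtain ⟨h1, h2⟩ := sub_imp_mem hc
        constructor <;> simp [cl, h1, h2]
      · -- simNeg ψ = imp ψ bot
        rw [hs'] at hs
        have : a = ψ ∧ b = bot := by simpa [neg, Formula.imp.injEq] using hs.symm
        obtain ⟨rfl, rfl⟩ := this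
        refine ⟨?_, bot_mem_cl φ⟩
        simp [cl, hψ]
  · intro a b hab
    simp only [cl, Finset.mem_insert, Finset.mem_union, Finset.mem_image] at hab
    rcases hab with h | h | h | ⟨ψ, hψ, hs⟩
    · exact absurd h (by simp)
    · exact absurd h (by simp [top, neg])
    · obtain ⟨h1, h2⟩ := sub_tri_mem h
      constructor <;> simp [cl, h1, h2]
    · rcases simNeg_eq ψ with ⟨c, rfl, hs'⟩ | hs'
      · rw [hs'] at hs
        subst hs
        obtain ⟨hc, _⟩ := sub_imp_mem hψ
        obtain ⟨h1, h2⟩ := sub_tri_mem hc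
        constructor <;> simp [cl, h1, h2]
      · rw [hs'] at hs
        exact absurd hs (by simp [neg])

lemma cl_simClosed (φ : Formula) : SimClosed (cl φ) := by
  intro ψ hψ
  simp only [cl, Finset.mem_insert, Finset.mem_union, Finset.mem_image] at hψ
  rcases hψ with rfl | rfl | h | ⟨χ, hχ, hs⟩
  · -- simNeg bot = neg bot = top
    have : simNeg bot = top := rfl
    rw [this]; exact top_mem_cl φ
  · -- simNeg top = simNeg (imp bot bot) = bot
    have : simNeg top = bot := rfl
    rw [this]; exact bot_mem_cl φ
  · simp only [cl, Finset.mem_insert, Finset.mem_union, Finset.mem_image]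
    right; right; right; exact ⟨ψ, h, rfl⟩
  · subst hs
    rcases simNeg_eq χ with ⟨c, rfl, hs'⟩ | hs'
    · rw [hs']
      have hc : c ∈ sub φ := (sub_imp_mem hχ).1
      rcases simNeg_eq c with ⟨e, rfl, hs''⟩ | hs''
      · rw [hs'']
        simp only [cl, Finset.mem_insert, Finset.mem_union, Finset.mem_image]
        right; right; left; exact (sub_imp_mem hc).1
      · rw [hs'']
        simp only [cl, Finset.mem_insert, Finset.mem_union, Finset.mem_image]
        right; right; right; exact ⟨c, hc, hs''.symm ▸ rfl⟩
    · rw [hs']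
      have : simNeg (neg χ) = χ := rfl
      rw [this]
      simp only [cl, Finset.mem_insert, Finset.mem_union, Finset.mem_image]
      right; right; left; exact hχ

end Formula
namespace Formula

lemma prv_imp_refl (a : Formula) : Prv false (imp a a) :=
  Prv.taut (by intro v h0 h1; simp [h1])

lemma bigConj_def (u : Finset Formula) : bigConj u = conjList u.toList := rfl

lemma prv_imp_bigConj_of_mem {u : Finset Formula} {a : Formula} (ha : a ∈ u) :
    Prv false (imp (bigConj u) a) :=
  Prv.taut (taut_conjList_mem (by rwa [Finset.mem_toList]))

/-- L1: if a ▷ b ∈ derivable and a ∈ u then ⋀u ▷ b is derivable. -/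
lemma deriv_tri_bigConj {w u : Finset Formula} {a b : Formula}
    (hab : Deriv false ↑w (tri a b)) (ha : a ∈ u) :
    Deriv false ↑w (tri (bigConj u) b) :=
  Deriv.mp (Deriv.thm (Prv.mono (prv_imp_bigConj_of_mem ha) (prv_imp_refl b))) hab

/-- L3: witness world. -/
lemma exists_witness_world {Φ : Finset Formula} (hsim : SimClosed Φ)
    {w u : Finset Formula} {c b : Formula} (hc : c ∈ Φ) (hb : b ∈ Φ)
    (h1 : Deriv false ↑w (tri (bigConj u) c))
    (h2 : ¬ Deriv false ↑w (tri (bigConj u) b)) :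
    ∃ v : Finset Formula, MaxCons false Φ v ∧ c ∈ v ∧ b ∉ v := by
  classical
  have hcons : ¬ Deriv false ↑([c, simNeg b].toFinset) bot := by
    intro hD
    have hP := prv_imp_conjList hD
    have hP2 : Prv false (imp c b) := by
      refine Prv.tautMP ?_ hP
      intro v h0 h1'
      simp [h1', conjList, v_conj h1' h0, v_top h1' h0, v_simNeg h1' h0, h0]
      cases v c <;> cases v b <;> simp
    exact h2 (Deriv.mp (Deriv.thm (Prv.mono (prv_imp_refl (bigConj u)) hP2)) h1)
  have hsub : ([c, simNeg b].toFinset : Finset Formula) ⊆ Φ := by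
    intro x hx
    simp only [List.toFinset_cons, List.toFinset_nil, Finset.insert_empty,
      Finset.mem_insert, Finset.mem_singleton] at hx
    rcases hx with rfl | rfl
    · exact hc
    · exact hsim b hb
  obtain ⟨v, hv, hsubv⟩ := lindenbaum hsim hsub hcons
  refine ⟨v, hv, ?_, ?_⟩
  · exact hsubv (by simp)
  · intro hbv
    exact hv.not_both hbv (hsubv (by simp))

lemma forall₂_mem_left {α β : Type*} {r : α → β → Prop} :
    ∀ {S : List α} {L : List β}, List.Forall₂ r S L → ∀ x ∈ S, ∃ y ∈ L, r x y := by
  intro S L h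
  induction h with
  | nil => intro x hx; exact absurd hx (List.not_mem_nil)
  | @cons a b S' L' hr _ ih =>
    intro x hx
    rcases List.mem_cons.1 hx with rfl | hx
    · exact ⟨b, List.mem_cons_self, hr⟩
    · obtain ⟨y, hy, hry⟩ := ih x hx
      exact ⟨y, List.mem_cons_of_mem _ hy, hry⟩

lemma forall₂_mem_right {α β : Type*} {r : α → β → Prop} :
    ∀ {S : List α} {L : List β}, List.Forall₂ r S L → ∀ y ∈ L, ∃ x ∈ S, r x y := by
  intro S L h
  induction h with
  | nil => intro y hy; exact absurd hy (List.not_mem_nil)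
  | @cons a b S' L' hr _ ih =>
    intro y hy
    rcases List.mem_cons.1 hy with rfl | hy
    · exact ⟨a, List.mem_cons_self, hr⟩
    · obtain ⟨x, hx, hrx⟩ := ih y hy
      exact ⟨x, List.mem_cons_of_mem _ hx, hrx⟩

lemma forall₂_map_of_forall {α β γ : Type*} {r : β → γ → Prop} {f : α → β} {g : α → γ} :
    ∀ {L : List α}, (∀ x ∈ L, r (f x) (g x)) → List.Forall₂ r (L.map f) (L.map g) := by
  intro L
  induction L with
  | nil => intro _; simp
  | cons a t ih =>
    intro h
    simp only [List.map_cons]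
    exact List.Forall₂.cons (h a (List.mem_cons_self))
      (ih fun x hx => h x (List.mem_cons_of_mem _ hx))

lemma deriv_tri_disjList {d : Bool} {w : Set Formula} {b : Formula} :
    ∀ {LL : List Formula}, (∀ x ∈ LL, Deriv d w (tri x b)) →
      Deriv d w (tri (disjList LL) b) := by
  intro LL
  induction LL with
  | nil => intro _; exact Deriv.thm (Prv.a2 b)
  | cons x t ih =>
    intro h
    exact Deriv.mp (Deriv.mp (Deriv.thm (Prv.a1 x b (disjList t)))
      (h x (List.mem_cons_self)))
      (ih fun y hy => h y (List.mem_cons_of_mem _ hy))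

/-- L2: existence of a maximal consistent u ∋ a with w ⊬ ⋀u ▷ b. -/
lemma exists_u_world {Φ : Finset Formula} (hsim : SimClosed Φ)
    {w : Finset Formula} {a b : Formula} (ha : a ∈ Φ)
    (h2 : ¬ Deriv false ↑w (tri a b)) :
    ∃ u : Finset Formula, MaxCons false Φ u ∧ a ∈ u ∧
      ¬ Deriv false ↑w (tri (bigConj u) b) := by
  classical
  by_contra hcon
  push_neg at hcon
  apply h2
  set sels : List (List Formula) := (Φ.toList.map (fun ψ => [ψ, simNeg ψ])).sections with hsels
  set good : List (List Formula) := sels.filter (fun S => a ∈ S) with hgood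
  -- each good selection gives a derivable triangle
  have step1 : ∀ S ∈ good, Deriv false ↑w (tri (conjList S) b) := by
    intro S hS
    rw [hgood, List.mem_filter] at hS
    obtain ⟨hSsec, haS⟩ := hS
    rw [hsels] at hSsec
    have hf2 := List.mem_sections.1 hSsec
    have hSΦ : ∀ x ∈ S, x ∈ Φ := by
      intro x hx
      obtain ⟨y, hy, hxy⟩ := forall₂_mem_left hf2 x hx
      obtain ⟨ψ, hψ, rfl⟩ := List.mem_map.1 hy
      rw [Finset.mem_toList] at hψ
      simp only [List.mem_cons, List.mem_singleton, List.not_mem_nil, or_false] at hxy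
      rcases hxy with rfl | rfl
      · exact hψ
      · exact hsim _ hψ
    by_cases hScons : Deriv false ↑S.toFinset bot
    · have hP := prv_imp_conjList hScons
      exact Deriv.thm (Prv.mp (Prv.mono hP (prv_imp_refl b)) (Prv.a2 b))
    · -- S.toFinset is a maximal consistent set containing a
      have hmc : MaxCons false Φ S.toFinset := by
        refine ⟨fun x hx => hSΦ x (List.mem_toFinset.1 hx), hScons, ?_⟩
        intro ψ hψ
        have hψ' : [ψ, simNeg ψ] ∈ Φ.toList.map (fun ψ => [ψ, simNeg ψ]) :=
          List.mem_map.2 ⟨ψ, Finset.mem_toList.2 hψ, rfl⟩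
        obtain ⟨x, hxS, hx⟩ := forall₂_mem_right hf2 _ hψ'
        simp only [List.mem_cons, List.mem_singleton, List.not_mem_nil, or_false] at hx
        rcases hx with rfl | rfl
        · exact Or.inl (List.mem_toFinset.2 hxS)
        · exact Or.inr (List.mem_toFinset.2 hxS)
      have hd := hcon S.toFinset hmc (List.mem_toFinset.2 (by simpa using haS))
      refine Deriv.mp (Deriv.thm (Prv.mono (Prv.taut (taut_conjList_mono ?_))
        (prv_imp_refl b))) hd
      intro x hx
      rw [Finset.mem_toList, List.mem_toFinset] at hx
      exact hx
  have step2 : Deriv false ↑w (tri (disjList (good.map conjList)) b) := by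
    refine deriv_tri_disjList ?_
    intro x hx
    obtain ⟨S, hS, rfl⟩ := List.mem_map.1 hx
    exact step1 S hS
  -- the tautology a → ⋁ good conjunctions
  have T1 : IsPropTaut (imp a (disjList (good.map conjList))) := by
    intro v h0 h1
    rw [h1, v_disjList h1 h0]
    by_cases hva : v a = true
    · set S₀ : List Formula := Φ.toList.map (fun ψ => if v ψ = true then ψ else simNeg ψ)
        with hS₀def
      have hS₀sec : S₀ ∈ sels := by
        rw [hsels]
        refine List.mem_sections.2 ?_
        rw [hS₀def]
        refine forall₂_map_of_forall ?_
        intro ψ _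
        split <;> simp
      have haS₀ : a ∈ S₀ := by
        rw [hS₀def]
        exact List.mem_map.2 ⟨a, Finset.mem_toList.2 ha, by simp [hva]⟩
      have hmemgood : conjList S₀ ∈ good.map conjList :=
        List.mem_map.2 ⟨S₀, by rw [hgood, List.mem_filter]; exact ⟨hS₀sec, by simpa using haS₀⟩, rfl⟩
      have hvS₀ : v (conjList S₀) = true := by
        rw [v_conjList h1 h0, List.all_eq_true]
        intro x hx
        rw [hS₀def] at hx
        obtain ⟨ψ, _, rfl⟩ := List.mem_map.1 hx
        split
        · assumption
        · rename_i hvψ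
          rw [v_simNeg h1 h0]
          simp only [Bool.not_eq_true] at hvψ
          simp [hvψ]
      have : (good.map conjList).any v = true :=
        List.any_eq_true.2 ⟨conjList S₀, hmemgood, hvS₀⟩
      simp [this]
    · simp only [Bool.not_eq_true] at hva
      simp [hva]
  exact Deriv.mp (Deriv.thm (Prv.mono (Prv.taut T1) (prv_imp_refl b))) step2

end Formula
namespace Formula

/-- Worlds of the canonical model. -/
def CW (Φ : Finset Formula) : Type :=
  {u : Finset Formula // MaxCons false Φ u} × Option {ψ : Formula // ψ ∈ Φ}

instance CW.finite (Φ : Finset Formula) : Finite (CW Φ) := by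
  have hfin : {u : Finset Formula | MaxCons false Φ u}.Finite :=
    Set.Finite.subset Φ.powerset.finite_toSet
      (fun u hu => Finset.mem_coe.2 (Finset.mem_powerset.2 hu.1))
  have h1 : Finite {u : Finset Formula // MaxCons false Φ u} := hfin.to_subtype
  have h2 : Finite {ψ : Formula // ψ ∈ Φ} := inferInstance
  exact Finite.instProd

/-- Canonical accessibility relation. -/
def crel (Φ : Finset Formula) : CW Φ → CW Φ → CW Φ → Prop := fun w u v =>
  ∃ a b : Formula, tri a b ∈ Φ ∧ tri a b ∉ w.1.1 ∧
    u.2.map Subtype.val = some (tri a b) ∧ a ∈ u.1.1 ∧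
    ¬ Deriv false ↑w.1.1 (tri (bigConj u.1.1) b) ∧ b ∉ v.1.1

/-- Canonical valuation. -/
def cval (Φ : Finset Formula) : CW Φ → ℕ → Prop := fun w p => var p ∈ w.1.1

/-- The truth lemma for the canonical model. -/
lemma truth_lemma {Φ : Finset Formula} (hsim : SimClosed Φ) (hsub : SubClosed Φ)
    (htop : top ∈ Φ) :
    ∀ ψ : Formula, ψ ∈ Φ → ∀ x : CW Φ,
      (Forces (crel Φ) (cval Φ) x ψ ↔ ψ ∈ x.1.1) := by
  intro ψ
  induction ψ with
  | var p =>
    intro _ x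
    exact Iff.rfl
  | bot =>
    intro _ x
    simp only [Forces]
    constructor
    · intro h; exact h.elim
    · intro h
      exact x.1.2.2.1 (Deriv.hyp h)
  | imp a b iha ihb =>
    intro hΦ x
    obtain ⟨haΦ, hbΦ⟩ := hsub.1 a b hΦ
    have mc := x.1.2
    simp only [Forces, iha haΦ x, ihb hbΦ x]
    constructor
    · intro h
      rcases mc.2.2 a haΦ with hma | hma
      · have hb := h hma
        exact (mc.mem_iff_deriv hΦ).2 (Deriv.tautMP
          (by intro v h0 h1; simp [h1]; cases v a <;> cases v b <;> simp) (Deriv.hyp hb))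
      · exact (mc.mem_iff_deriv hΦ).2 (Deriv.tautMP
          (by intro v h0 h1; simp [h1, v_simNeg h1 h0]; cases v a <;> cases v b <;> simp)
          (Deriv.hyp hma))
    · intro h ha
      exact (mc.mem_iff_deriv hbΦ).2 (Deriv.mp (Deriv.hyp h) (Deriv.hyp ha))
  | tri a b iha ihb =>
    intro hΦ x
    obtain ⟨haΦ, hbΦ⟩ := hsub.2 a b hΦ
    have mc := x.1.2
    constructor
    · -- contrapositive
      intro hF
      by_contra hmem
      have hnd : ¬ Deriv false ↑x.1.1 (tri a b) := fun hD =>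
        hmem ((mc.mem_iff_deriv hΦ).2 hD)
      obtain ⟨u₀, hu₀mc, hau₀, hnd'⟩ := exists_u_world hsim haΦ hnd
      obtain ⟨v₀, hv₀mc, _, hbv₀⟩ := exists_witness_world hsim htop hbΦ
        (Deriv.thm (Prv.a3 (bigConj u₀))) hnd'
      set U : CW Φ := (⟨u₀, hu₀mc⟩, some ⟨tri a b, hΦ⟩) with hU
      set V : CW Φ := (⟨v₀, hv₀mc⟩, none) with hV
      have hrel : crel Φ x U V :=
        ⟨a, b, hΦ, hmem, by simp [hU], hau₀, hnd', hbv₀⟩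
      obtain ⟨v', hrel', hfb⟩ := hF U V hrel ((iha haΦ U).2 hau₀)
      obtain ⟨a₁, b₁, _, _, htag₁, _, _, hb₁v'⟩ := hrel'
      have : tri a b = tri a₁ b₁ := by
        rw [hU] at htag₁
        simpa using htag₁
      obtain ⟨rfl, rfl⟩ : a = a₁ ∧ b = b₁ := by
        constructor <;> injection this
      exact hb₁v' ((ihb hbΦ v').1 hfb)
    · intro h
      intro u v hrel hfa
      obtain ⟨a₀, b₀, hΦ₀, hnw, htag, ha₀u, hnd, _⟩ := hrel
      have hau : a ∈ u.1.1 := (iha haΦ u).1 hfa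
      have hd : Deriv false ↑x.1.1 (tri (bigConj u.1.1) b) :=
        deriv_tri_bigConj (Deriv.hyp h) hau
      obtain ⟨v', hv'mc, hbv', hb₀v'⟩ := exists_witness_world hsim hbΦ
        ((hsub.2 a₀ b₀ hΦ₀).2) hd hnd
      refine ⟨((⟨v', hv'mc⟩, none) : CW Φ),
        ⟨a₀, b₀, hΦ₀, hnw, htag, ha₀u, hnd, hb₀v'⟩, (ihb hbΦ _).2 hbv'⟩

/-- Kripke completeness of ℜ. -/
theorem completeness {φ : Formula}
    (h : ∀ (M : KripkeModel) (w : M.W), M.Forces w φ) : Prv false φ := by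
  by_contra hnp
  have hcons : ¬ Deriv false ↑([simNeg φ].toFinset) bot := by
    intro hD
    apply hnp
    refine Prv.tautMP ?_ (prv_imp_conjList hD)
    intro v h0 h1
    simp [h1, conjList, v_conj h1 h0, v_top h1 h0, v_simNeg h1 h0, h0]
  have hsubΔ : ([simNeg φ].toFinset : Finset Formula) ⊆ cl φ := by
    intro x hx
    simp only [List.toFinset_cons, List.toFinset_nil, Finset.insert_empty,
      Finset.mem_singleton] at hx
    subst hx
    exact simNeg_mem_cl φ
  obtain ⟨w₀, hw₀mc, hΔw₀⟩ := lindenbaum (cl_simClosed φ) hsubΔ hcons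
  set M : KripkeModel := ⟨CW (cl φ), CW.finite _, crel (cl φ), cval (cl φ)⟩ with hM
  have hforce := h M ((⟨w₀, hw₀mc⟩, none) : CW (cl φ))
  have := (truth_lemma (cl_simClosed φ) (cl_subClosed φ) (top_mem_cl φ) φ
    (mem_cl_self φ) ((⟨w₀, hw₀mc⟩, none) : CW (cl φ))).1 hforce
  exact hw₀mc.not_both this (hΔw₀ (by simp))

end Formula
namespace Formula

/-! ### Kripke soundness -/

lemma forces_taut {W : Type*} (rel : W → W → W → Prop) (val : W → ℕ → Prop) (w : W)
    {φ : Formula} (h : IsPropTaut φ) : Forces rel val w φ := by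
  classical
  set v : Formula → Bool := fun ψ => decide (Forces rel val w ψ) with hv
  have h0 : v bot = false := by rw [hv]; exact decide_eq_false_iff_not.2 (fun h => h)
  have h1 : ∀ a b, v (imp a b) = (!(v a) || v b) := by
    intro a b
    simp only [hv, Forces]
    by_cases ha : Forces rel val w a <;> by_cases hb : Forces rel val w b <;>
      simp [ha, hb]
  have := h v h0 h1
  simpa [hv] using this

theorem kripke_sound_aux {d : Bool} {φ : Formula} (h : Prv d φ) (hd : d = false) :
    ∀ {W : Type} (rel : W → W → W → Prop) (val : W → ℕ → Prop) (w : W),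
      Forces rel val w φ := by
  induction h with
  | taut ht => intro W rel val w; exact forces_taut rel val w ht
  | a1 a b c =>
    intro W rel val w
    intro h1 h2 u v hrel hfd
    by_cases ha : Forces rel val u a
    · exact h1 u v hrel ha
    · exact h2 u v hrel (hfd fun hf => absurd hf ha)
  | a2 a =>
    intro W rel val w
    intro u v hrel hbot
    exact hbot.elim
  | a3 a =>
    intro W rel val w
    intro u v hrel _
    exact ⟨v, hrel, fun h => h⟩
  | a4 a b c => exact absurd hd (by simp)
  | mp h1 h2 ih1 ih2 =>
    intro W rel val w
    exact (ih1 hd rel val w) (ih2 hd rel val w)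
  | @mono d a1 a2 b1 b2 h1 h2 ih1 ih2 =>
    intro W rel val w
    intro hf u v hrel hfa
    obtain ⟨v', hrel', hb1⟩ := hf u v hrel ((ih1 hd rel val u) hfa)
    exact ⟨v', hrel', (ih2 hd rel val v') hb1⟩

theorem kripke_sound {φ : Formula} (h : Prv false φ) :
    ∀ (M : KripkeModel) (w : M.W), M.Forces w φ := fun M w =>
  kripke_sound_aux h rfl M.rel M.val w

/-! ### Soundness for the semantics of nondeterministic computations -/

lemma mem_semN_imp {val : ℕ → Set ℕ} {a b : Formula} {x : ℕ} :
    x ∈ semN val (imp a b) ↔ (x ∈ semN val a → x ∈ semN val b) := by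
  simp only [semN, Set.mem_union, Set.mem_diff, Set.mem_univ, true_and]
  tauto

lemma semN_disj (val : ℕ → Set ℕ) (a b : Formula) :
    semN val (disj a b) = semN val a ∪ semN val b := by
  ext x
  simp only [disj, neg, semN, Set.mem_union, Set.mem_diff, Set.mem_univ, true_and,
    Set.mem_empty_iff_false, or_false]
  tauto

lemma semN_top (val : ℕ → Set ℕ) : semN val top = Set.univ := by
  ext x
  simp [top, neg, semN]

theorem semN_sound_aux {d : Bool} {φ : Formula} (h : Prv d φ) (hd : d = false) :
    ∀ val : ℕ → Set ℕ, semN val φ = Set.univ := by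
  induction h with
  | @taut _ φ ht =>
    intro val
    ext x
    simp only [Set.mem_univ, iff_true]
    classical
    set v : Formula → Bool := fun ψ => decide (x ∈ semN val ψ) with hv
    have h0 : v bot = false := by simp [hv, semN]
    have h1 : ∀ a b, v (imp a b) = (!(v a) || v b) := by
      intro a b
      simp only [hv]
      by_cases ha : x ∈ semN val a <;> by_cases hb : x ∈ semN val b <;>
        simp [ha, hb, mem_semN_imp]
    have := ht v h0 h1
    simpa [hv] using this
  | a1 a b c =>
    intro val
    ext x
    simp only [Set.mem_univ, iff_true]
    rw [mem_semN_imp, mem_semN_imp]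
    intro h1 h2
    intro u hu hz
    rw [semN_disj] at hu
    rcases hu with hu | hu
    · exact h1 u hu hz
    · exact h2 u hu hz
  | a2 a =>
    intro val
    ext x
    simp only [Set.mem_univ, iff_true]
    intro u hu
    simp [semN] at hu
  | a3 a =>
    intro val
    ext x
    simp only [Set.mem_univ, iff_true]
    intro u hu hz
    rw [semN_top, Set.inter_univ]
    exact hz
  | a4 a b c => exact absurd hd (by simp)
  | mp h1 h2 ih1 ih2 =>
    intro val
    ext x
    simp only [Set.mem_univ, iff_true]
    have hx1 : x ∈ semN val _ := (ih1 hd val).symm ▸ Set.mem_univ x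
    have hx2 : x ∈ semN val _ := (ih2 hd val).symm ▸ Set.mem_univ x
    exact mem_semN_imp.1 hx1 hx2
  | @mono d a1 a2 b1 b2 h1 h2 ih1 ih2 =>
    intro val
    ext x
    simp only [Set.mem_univ, iff_true]
    rw [mem_semN_imp]
    intro hx
    intro u hu hz
    have hu2 : u ∈ semN val a2 := by
      have : u ∈ semN val (imp a1 a2) := (ih1 hd val).symm ▸ Set.mem_univ u
      exact mem_semN_imp.1 this hu
    obtain ⟨y, hy1, hy2⟩ := Set.nonempty_iff_ne_empty.2 (hx u hu2 hz)
    refine Set.nonempty_iff_ne_empty.1 ⟨y, hy1, ?_⟩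
    have : y ∈ semN val (imp b1 b2) := (ih2 hd val).symm ▸ Set.mem_univ y
    exact mem_semN_imp.1 this hy2

theorem semN_sound {φ : Formula} (h : Prv false φ) :
    ∀ val : ℕ → Set ℕ, semN val φ = Set.univ := semN_sound_aux h rfl

end Formula
namespace Formula

open Nat.Partrec (Code)
open Nat.Partrec.Code
open Encodable

/-- Computability of the finite table-checking function. -/
lemma table_primrec {n : ℕ} (L : List (Fin n × Fin n × Fin n)) :
    Primrec₂ (fun (c : Code) (x : ℕ) =>
      L.any (fun t => x == Nat.pair t.1
        (Nat.pair (encode (c.curry t.2.1)) (encode (c.curry t.2.2))))) := by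
  induction L with
  | nil =>
    simp only [List.any_nil]
    exact Primrec₂.const false
  | cons t L ih =>
    simp only [List.any_cons]
    refine Primrec.or.comp ?_ ih
    have hK : Primrec (fun c : Code => Nat.pair (t.1 : ℕ)
        (Nat.pair (encode (c.curry t.2.1)) (encode (c.curry t.2.2)))) := by
      refine Primrec₂.natPair.comp (Primrec.const _) ?_
      refine Primrec₂.natPair.comp ?_ ?_
      · exact Primrec.encode.comp (primrec₂_curry.comp Primrec.id (Primrec.const _))
      · exact Primrec.encode.comp (primrec₂_curry.comp Primrec.id (Primrec.const _))
    exact Primrec.beq.comp Primrec.snd (hK.comp Primrec.fst)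

/-- The fixed-point family of codes implementing a finite ternary relation. -/
lemma exists_num {n : ℕ} (R : Fin n → Fin n → Fin n → Prop) :
    ∃ num : Fin n → ℕ, Function.Injective num ∧
      ∀ (i : Fin n) (u : ℕ), zeta (num i) u =
        {v : ℕ | ∃ j k : Fin n, R i j k ∧ u = num j ∧ v = num k} := by
  classical
  set T : List (Fin n × Fin n × Fin n) :=
    (Finset.univ.filter (fun t : Fin n × Fin n × Fin n => R t.1 t.2.1 t.2.2)).toList with hT
  have hTmem : ∀ t : Fin n × Fin n × Fin n, t ∈ T ↔ R t.1 t.2.1 t.2.2 := by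
    intro t
    simp [hT]
  set g : Code → ℕ → Bool := fun c x =>
    T.any (fun t => x == Nat.pair t.1
      (Nat.pair (encode (c.curry t.2.1)) (encode (c.curry t.2.2)))) with hg
  have hgc : Primrec₂ g := table_primrec T
  set f : Code → ℕ →. ℕ := fun c x => Nat.rfind (fun _ => Part.some (g c x)) with hf
  have hfp : Partrec₂ f := by
    refine Partrec.rfind ?_
    exact Partrec.to₂ ((hgc.to_comp.comp
      (Computable.fst.comp Computable.fst)
      (Computable.snd.comp Computable.fst)).partrec.of_eq (fun p => rfl))
  obtain ⟨c, hc⟩ := fixed_point₂ hfp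
  refine ⟨fun i => encode (c.curry i), ?_, ?_⟩
  · intro i j hij
    have := (curry_inj (Encodable.encode_injective hij)).2
    exact Fin.val_injective this
  · intro i u
    ext v
    have heval : ((Denumerable.ofNat Code (encode (c.curry (i : ℕ)))).eval
        (Nat.pair u v)) = f c (Nat.pair (i : ℕ) (Nat.pair u v)) := by
      rw [Denumerable.ofNat_encode, eval_curry, hc]
    have hdom : ((Denumerable.ofNat Code (encode (c.curry (i : ℕ)))).eval
        (Nat.pair u v)).Dom ↔ g c (Nat.pair (i : ℕ) (Nat.pair u v)) = true := by
      rw [heval]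
      simp only [hf]
      constructor
      · intro h
        have hmem := Part.get_mem h
        have := Nat.rfind_spec hmem
        rwa [Part.mem_some_iff, eq_comm] at this
      · intro h
        exact Nat.rfind_dom.2 ⟨0, by simp [h], fun {m} _ => trivial⟩
    have hginterp : g c (Nat.pair (i : ℕ) (Nat.pair u v)) = true ↔
        ∃ j k : Fin n, R i j k ∧ u = encode (c.curry (j : ℕ)) ∧
          v = encode (c.curry (k : ℕ)) := by
      rw [hg]
      simp only [List.any_eq_true, beq_iff_eq]
      constructor
      · rintro ⟨t, htm, hteq⟩
        rw [Nat.pair_eq_pair, Nat.pair_eq_pair] at hteq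
        obtain ⟨hi, hu, hv⟩ := hteq
        have hit : i = t.1 := Fin.val_injective hi
        refine ⟨t.2.1, t.2.2, ?_, hu, hv⟩
        rw [hit]
        exact (hTmem t).1 htm
      · rintro ⟨j, k, hR, hu, hv⟩
        exact ⟨(i, j, k), (hTmem (i, j, k)).2 hR, by rw [hu, hv]⟩
    show ((Denumerable.ofNat Code (encode (c.curry (i : ℕ)))).eval (Nat.pair u v)).Dom ↔ _
    rw [hdom, hginterp]
    rfl

/-- Every formula valid in the ζ-semantics is valid in all Kripke models. -/
theorem semN_implies_kripke {φ : Formula}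
    (h1 : ∀ val : ℕ → Set ℕ, semN val φ = Set.univ) :
    ∀ (M : KripkeModel) (w : M.W), M.Forces w φ := by
  intro M w₀
  by_contra hnf
  classical
  have hfin := M.fin
  obtain ⟨n, ⟨e⟩⟩ := Finite.exists_equiv_fin M.W
  set R : Fin n → Fin n → Fin n → Prop :=
    fun i j k => M.rel (e.symm i) (e.symm j) (e.symm k) with hR
  obtain ⟨num, hinj, hzeta⟩ := exists_num R
  set val : ℕ → Set ℕ := fun p => {m | ∃ i : Fin n, m = num i ∧ M.val (e.symm i) p}
    with hval
  have truth : ∀ (ψ : Formula) (i : Fin n),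
      num i ∈ semN val ψ ↔ Formula.Forces M.rel M.val (e.symm i) ψ := by
    intro ψ
    induction ψ with
    | var p =>
      intro i
      simp only [semN, hval, Set.mem_setOf_eq, Forces]
      constructor
      · rintro ⟨i', hi', hv⟩
        rw [hinj hi']
        exact hv
      · intro hv
        exact ⟨i, rfl, hv⟩
    | bot =>
      intro i
      simp [semN, Forces]
    | imp a b iha ihb =>
      intro i
      rw [mem_semN_imp]
      simp only [Forces]
      rw [iha i, ihb i]
    | tri a b iha ihb =>
      intro i
      simp only [semN, Set.mem_setOf_eq, Forces]
      constructor
      · intro hm u v hrel hfa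
        set j : Fin n := e u with hj
        set k : Fin n := e v with hk
        have hRijk : R i j k := by
          rw [hR, hj, hk]
          simpa [Equiv.symm_apply_apply] using hrel
        have hne : zeta (num i) (num j) ≠ ∅ := by
          rw [hzeta]
          intro hempty
          have : num k ∈ ({v : ℕ | ∃ j' k' : Fin n, R i j' k' ∧ num j = num j' ∧
              v = num k'} : Set ℕ) := ⟨j, k, hRijk, rfl, rfl⟩
          rw [hempty] at this
          exact this
        have hja : num j ∈ semN val a := by
          rw [iha j, hj, Equiv.symm_apply_apply]
          exact hfa
        have hint := hm (num j) hja hne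
        obtain ⟨x, hx1, hx2⟩ := Set.nonempty_iff_ne_empty.2 hint
        rw [hzeta] at hx1
        obtain ⟨j', k', hR', hj', hx⟩ := hx1
        have hjj : j' = j := (hinj hj').symm
        subst hjj
        subst hx
        refine ⟨e.symm k', ?_, ?_⟩
        · have : M.rel (e.symm i) (e.symm j) (e.symm k') := hR'
          rwa [hj, Equiv.symm_apply_apply] at this
        · rw [← ihb k']
          exact hx2
      · intro hF u hu hne
        rw [hzeta] at hne
        obtain ⟨x, hx⟩ := Set.nonempty_iff_ne_empty.2 hne
        obtain ⟨j, k, hRijk, hu', _⟩ := hx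
        subst hu'
        have hfa : Formula.Forces M.rel M.val (e.symm j) a := (iha j).1 hu
        obtain ⟨v', hrel', hfb⟩ := hF (e.symm j) (e.symm k) hRijk hfa
        refine Set.nonempty_iff_ne_empty.1 ⟨num (e v'), ?_, ?_⟩
        · rw [hzeta]
          refine ⟨j, e v', ?_, rfl, rfl⟩
          rw [hR]
          simpa [Equiv.symm_apply_apply] using hrel'
        · rw [ihb (e v'), Equiv.symm_apply_apply]
          exact hfb
  have hall := h1 val
  have := (truth φ (e w₀)).1 (hall ▸ Set.mem_univ (num (e w₀)))
  rw [Equiv.symm_apply_apply] at this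
  exact hnf this

end Formula
open Formula in
/-- Main theorem for ℜ: for every formula φ the following are equivalent:
(1) φ is a tautology of the standard enumeration ζ of nondeterministic
partial recursive functions; (2) φ is forced at every world of every Kripke
model; (3) φ is a theorem of ℜ. -/
theorem grand_R (φ : Formula) :
    List.TFAE [
      ∀ val : ℕ → Set ℕ, semN val φ = Set.univ,
      ∀ (M : KripkeModel) (w : M.W), M.Forces w φ,
      Prv false φ ] := by
  tfae_have 3 → 1 := fun h => semN_sound h
  tfae_have 1 → 2 := fun h => semN_implies_kripke h
  tfae_have 2 → 3 := fun h => completeness h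
  tfae_finish
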